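/- Let S be a 'word-labeled graph' (each vertex has either in-degree 1 and out-degree > 1, hence 'distributing', or in-degree > 1 and out-degree 1, hence 'collecting') in which property 3 of Rauzy schemes holds (front word equals back word on symmetric paths) and the concatenation property: if path s₁ ends at a distributing vertex where path s₂ starts, then F(s₁s₂) = F(s₁)F(s₂). Then for any path s₁ that is a sub-path of a symmetric path s, the front word F(s₁) is a factor of F(s). -/

import Mathlib

/-- A word-labeled graph: a directed graph each of whose vertices is either
"distributing" (in-degree 1, out-degree > 1) or "collecting" (in-degree > 1,
out-degree 1), with each edge carrying a front word and a back word. -/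
structure WLGraph (V E Sig : Type*) where
  src : E → V
  tgt : E → V
  front : E → List Sig
  back : E → List Sig
  /-- `dist v = true` means `v` is distributing; `false` means collecting. -/
  dist : V → Bool
  indeg_dist : ∀ v, dist v = true → ∃! e, tgt e = v
  outdeg_dist : ∀ v, dist v = true → ∃ e₁ e₂, src e₁ = v ∧ src e₂ = v ∧ e₁ ≠ e₂
  outdeg_coll : ∀ v, dist v = false → ∃! e, src e = v
  indeg_coll : ∀ v, dist v = false → ∃ e₁ e₂, tgt e₁ = v ∧ tgt e₂ = v ∧ e₁ ≠ e₂

/-- A path: consecutive edges are incident. -/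
def WLGraph.IsPath {V E Sig : Type*} (G : WLGraph V E Sig) (s : List E) : Prop :=
  s.Chain' (fun e₁ e₂ => G.tgt e₁ = G.src e₂)

/-- The front word of a path: concatenation of the front words of the front-generating
edges (the first edge together with all edges leaving distributing vertices). -/
def WLGraph.FrontWord {V E Sig : Type*} (G : WLGraph V E Sig) : List E → List Sig
  | [] => []
  | e :: rest => G.front e ++ (rest.filter (fun e₂ => G.dist (G.src e₂))).flatMap G.front

/-- The back word of a path: concatenation of the back words of the back-generating
edges (all edges entering collecting vertices, together with the last edge). -/
def WLGraph.BackWord {V E Sig : Type*} (G : WLGraph V E Sig) (s : List E) : List Sig :=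
  (s.dropLast.filter (fun e₂ => !G.dist (G.tgt e₂))).flatMap G.back ++
    (s.getLast?.elim [] G.back)

/-- A symmetric path: a nonempty path starting at a collecting vertex and ending at a
distributing vertex. -/
def WLGraph.IsSymmetric {V E Sig : Type*} (G : WLGraph V E Sig) (s : List E) : Prop :=
  G.IsPath s ∧ s ≠ [] ∧
    (∀ e, s.head? = some e → G.dist (G.src e) = false) ∧
    (∀ e, s.getLast? = some e → G.dist (G.tgt e) = true)

/-- In a word-labeled graph satisfying property 3 of Rauzy schemes (front = back on
symmetric paths) and the concatenation properties, the front word of a sub-path of a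
symmetric path is a factor of the front word of that symmetric path. -/
theorem stmt18 {V E Sig : Type*} (G : WLGraph V E Sig)
    (hsym : ∀ s : List E, G.IsSymmetric s → G.FrontWord s = G.BackWord s)
    (hconcatF : ∀ s₁ s₂ : List E, G.IsPath (s₁ ++ s₂) → s₁ ≠ [] → s₂ ≠ [] →
      (∀ e, s₂.head? = some e → G.dist (G.src e) = true) →
      G.FrontWord (s₁ ++ s₂) = G.FrontWord s₁ ++ G.FrontWord s₂)
    (hconcatB : ∀ s₁ s₂ : List E, G.IsPath (s₁ ++ s₂) → s₁ ≠ [] → s₂ ≠ [] →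
      (∀ e, s₂.head? = some e → G.dist (G.src e) = false) →
      G.BackWord (s₁ ++ s₂) = G.BackWord s₁ ++ G.BackWord s₂)
    (s s₁ : List E) (hs : G.IsSymmetric s) (hs₁ : G.IsPath s₁) (hne : s₁ ≠ [])
    (hsub : s₁ <:+: s) :
    G.FrontWord s₁ <:+: G.FrontWord s := by
  obtain ⟨a, b, hab⟩ := hsub
  obtain ⟨f₁, t₁, rfl⟩ := List.exists_cons_of_ne_nil hne
  obtain ⟨hpath, hsne, hhead, hlast⟩ := hs
  by_cases hd : G.dist (G.src f₁) = true
  · -- the start of s₁ is distributing, so s₁'s front generators are front generators of s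
    have ha : a ≠ [] := by
      rintro rfl
      have := hhead f₁ (by rw [← hab]; rfl)
      simp [hd] at this
    obtain ⟨e₀, a', rfl⟩ := List.exists_cons_of_ne_nil ha
    subst hab
    refine ⟨G.front e₀ ++ ((a'.filter (fun e₂ => G.dist (G.src e₂))).flatMap G.front),
      ((b.filter (fun e₂ => G.dist (G.src e₂))).flatMap G.front), ?_⟩
    simp [WLGraph.FrontWord, List.filter_append, hd, List.flatMap_append]
  · -- the start of s₁ is collecting: use the suffix c = s₁ ++ b, which is symmetric
    replace hd : G.dist (G.src f₁) = false := by
      cases h : G.dist (G.src f₁) <;> simp_all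
    set c : List E := f₁ :: (t₁ ++ b) with hc
    have hcs : a ++ c = s := by rw [← hab]; simp [hc]
    have hF₁c : G.FrontWord (f₁ :: t₁) <+: G.FrontWord c := by
      refine ⟨(b.filter (fun e₂ => G.dist (G.src e₂))).flatMap G.front, ?_⟩
      simp [WLGraph.FrontWord, hc, List.filter_append, List.flatMap_append]
    rcases eq_or_ne a [] with rfl | ha
    · simp only [List.nil_append] at hcs
      rw [hcs] at hF₁c
      exact hF₁c.isInfix
    · have hcpath : G.IsPath c := hpath.infix ⟨a, [], by simp [hcs]⟩
      have hcsym : G.IsSymmetric c := by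
        refine ⟨hcpath, by simp [hc], ?_, ?_⟩
        · intro e he
          simp only [hc, List.head?_cons, Option.some.injEq] at he
          rw [← he]; exact hd
        · intro e he
          apply hlast
          rw [← hcs, List.getLast?_append_of_ne_nil _ (by simp [hc])]
          exact he
      have hB : G.BackWord s = G.BackWord a ++ G.BackWord c := by
        rw [← hcs]
        refine hconcatB a c (by rw [hcs]; exact hpath) ha (by simp [hc]) ?_
        intro e he
        simp only [hc, List.head?_cons, Option.some.injEq] at he
        rw [← he]; exact hd
      have hsuf : G.FrontWord c <:+ G.FrontWord s := by
        rw [hsym s ⟨hpath, hsne, hhead, hlast⟩, hsym c hcsym, hB]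
        exact ⟨G.BackWord a, rfl⟩
      obtain ⟨y, hy⟩ := hF₁c
      obtain ⟨x, hx⟩ := hsuf
      exact ⟨x, y, by rw [← hx, ← hy]; simp⟩
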